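/- Let P ∈ k[X,σ] be monic étale, such that the Jordan form of φ^r on D_P consists of a single Jordan block (dual type (a) for a single irreducible N). Then P admits a unique factorization as a product of monic irreducible skew polynomials. -/

import Mathlib

/-- A ring `R` together with a ring embedding `ι : k →+* R` and an element `X : R` is
*the* skew polynomial ring `k[X,σ]` if `X * ι a = ι (σ a) * X` for all `a : k` and every
element of `R` can be written uniquely as a finite sum `∑ ι aᵢ * X ^ i`. -/
structure IsSkewPolyRing (k : Type*) [Field k] (σ : k ≃+* k)
    (R : Type*) [Ring R] (ι : k →+* R) (X : R) : Prop where
  X_mul : ∀ a : k, X * ι a = ι (σ a) * X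
  repr_unique : ∀ y : R, ∃! c : ℕ →₀ k, y = c.sum fun i a => ι a * X ^ i

namespace IsSkewPolyRing

variable {k : Type*} [Field k] {σ : k ≃+* k} {R : Type*} [Ring R] {ι : k →+* R} {X : R}

/-- The coefficients of a skew polynomial. -/
noncomputable def repr (h : IsSkewPolyRing k σ R ι X) (y : R) : ℕ →₀ k :=
  (h.repr_unique y).exists.choose

/-- `y` has degree at most `n`. -/
def degLE (h : IsSkewPolyRing k σ R ι X) (y : R) (n : ℕ) : Prop :=
  ∀ i, n < i → h.repr y i = 0

/-- `y` is monic of degree `d`. -/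
def MonicOfDegree (h : IsSkewPolyRing k σ R ι X) (y : R) (d : ℕ) : Prop :=
  h.repr y d = 1 ∧ h.degLE y d

/-- `y` is monic. -/
def Monic (h : IsSkewPolyRing k σ R ι X) (y : R) : Prop := ∃ d, h.MonicOfDegree y d

/-- The matrix of right multiplication by `P` on `k[X,σ]`, viewed as a free module of
rank `r` over `k[X^r]` (identified with `Polynomial k` via `X^r ↦ Y`), in the basis
`1, X, …, X^(r-1)`. -/
noncomputable def normMatrix (h : IsSkewPolyRing k σ R ι X) (r : ℕ) (P : R) :
    Matrix (Fin r) (Fin r) (Polynomial k) :=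
  fun l j => ∑ i ∈ (h.repr P).support,
    if (i + (j : ℕ)) % r = (l : ℕ) then
      Polynomial.monomial ((i + (j : ℕ)) / r) ((σ ^ (j : ℕ)) (h.repr P i))
    else 0

/-- The reduced norm of a skew polynomial `P`: the determinant of right multiplication
by `P` on `k[X,σ]` viewed as a free `k[X^r]`-module of rank `r`, written as a
(commutative) polynomial in the variable `X^r`. -/
noncomputable def norm (h : IsSkewPolyRing k σ R ι X) (r : ℕ) (P : R) : Polynomial k :=
  (h.normMatrix r P).det

/-- turning coefficients into an element -/
noncomputable def toF (ι : k →+* R) (X : R) : (ℕ →₀ k) →+ R where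
  toFun c := c.sum fun i a => ι a * X ^ i
  map_zero' := Finsupp.sum_zero_index
  map_add' c d := by
    apply Finsupp.sum_add_index <;> intro i _
    · simp
    · intro b₁ b₂; simp [add_mul]

theorem toF_apply (c : ℕ →₀ k) : toF ι X c = c.sum fun i a => ι a * X ^ i := rfl

variable (h : IsSkewPolyRing k σ R ι X)

theorem toF_repr (y : R) : toF ι X (h.repr y) = y :=
  ((h.repr_unique y).exists.choose_spec).symm

theorem repr_toF (c : ℕ →₀ k) : h.repr (toF ι X c) = c :=
  (h.repr_unique (toF ι X c)).unique ((h.repr_unique (toF ι X c)).exists.choose_spec) rfl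

theorem repr_zero : h.repr 0 = 0 := by
  have := h.repr_toF 0; rwa [map_zero] at this

theorem repr_eq_zero {y : R} : h.repr y = 0 ↔ y = 0 := by
  constructor
  · intro hy; rw [← h.toF_repr y, hy, map_zero]
  · rintro rfl; exact h.repr_zero

theorem toF_single (i : ℕ) (a : k) : toF ι X (Finsupp.single i a) = ι a * X ^ i := by
  rw [toF_apply, Finsupp.sum_single_index]; simp

theorem repr_one : h.repr 1 = Finsupp.single 0 1 := by
  have : toF ι X (Finsupp.single 0 1) = 1 := by rw [toF_single]; simp
  rw [← this, h.repr_toF]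

theorem repr_iota (a : k) : h.repr (ι a) = Finsupp.single 0 a := by
  have : toF ι X (Finsupp.single 0 a) = ι a := by rw [toF_single]; simp
  rw [← this, h.repr_toF]

theorem X_pow_mul_iota (h : IsSkewPolyRing k σ R ι X) (n : ℕ) (a : k) :
    X ^ n * ι a = ι ((σ ^ n) a) * X ^ n := by
  induction n generalizing a with
  | zero => simp
  | succ m ih =>
    have e : (σ ^ (m + 1)) a = (σ ^ m) (σ a) := by rw [pow_succ]; rfl
    rw [pow_succ, mul_assoc, h.X_mul a, ← mul_assoc, ih (σ a), e, mul_assoc, ← pow_succ]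

/-- coefficients of a product -/
noncomputable def mulC (σ : k ≃+* k) (c d : ℕ →₀ k) : ℕ →₀ k :=
  c.sum fun i a => d.sum fun j b => Finsupp.single (i + j) (a * (σ ^ i) b)

theorem toF_mul (h : IsSkewPolyRing k σ R ι X) (c d : ℕ →₀ k) :
    toF ι X c * toF ι X d = toF ι X (mulC σ c d) := by
  rw [mulC]
  simp only [map_finsuppSum, toF_single]
  conv_lhs => rw [toF_apply, Finsupp.sum_mul]
  refine Finsupp.sum_congr fun i _ => ?_
  conv_lhs => rw [toF_apply, Finsupp.mul_sum]
  refine Finsupp.sum_congr fun j _ => ?_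
  rw [← mul_assoc, mul_assoc (ι _) (X ^ i) (ι _), h.X_pow_mul_iota i _,
    ← mul_assoc, ← map_mul, mul_assoc, ← pow_add]

theorem repr_mul (x y : R) : h.repr (x * y) = mulC σ (h.repr x) (h.repr y) := by
  have : x * y = toF ι X (mulC σ (h.repr x) (h.repr y)) := by
    conv_lhs => rw [← h.toF_repr x, ← h.toF_repr y]
    exact h.toF_mul _ _
  rw [this, h.repr_toF]

theorem mulC_apply (c d : ℕ →₀ k) (n : ℕ) :
    mulC σ c d n = c.sum fun i a => d.sum fun j b => if i + j = n then a * (σ ^ i) b else 0 := by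
  rw [mulC, Finsupp.sum_apply]
  apply Finsupp.sum_congr; intro i _
  rw [Finsupp.sum_apply]
  apply Finsupp.sum_congr; intro j _
  rw [Finsupp.single_apply]

theorem support_le_of_degLE {y : R} {p : ℕ} (hy : h.degLE y p) {i : ℕ}
    (hi : i ∈ (h.repr y).support) : i ≤ p := by
  by_contra hc
  exact (Finsupp.mem_support_iff.mp hi) (hy i (by omega))

theorem degLE_mul {x y : R} {p q : ℕ} (hx : h.degLE x p) (hy : h.degLE y q) :
    h.degLE (x * y) (p + q) := by
  intro n hn
  rw [h.repr_mul, mulC_apply]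
  apply Finset.sum_eq_zero
  intro i hi
  apply Finset.sum_eq_zero
  intro j hj
  have h1 := h.support_le_of_degLE hx hi
  have h2 := h.support_le_of_degLE hy hj
  exact if_neg (by omega)

theorem repr_mul_top {x y : R} {p q : ℕ} (hx : h.degLE x p) (hy : h.degLE y q) :
    h.repr (x * y) (p + q) = h.repr x p * (σ ^ p) (h.repr y q) := by
  classical
  rw [h.repr_mul, mulC_apply]
  have step : ∀ i ∈ (h.repr x).support,
      ((h.repr y).sum fun j b => if i + j = p + q then h.repr x i * (σ ^ i) b else 0)
        = if i = p then h.repr x i * (σ ^ i) (h.repr y q) else 0 := by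
    intro i hi
    have hip := h.support_le_of_degLE hx hi
    by_cases hip' : i = p
    · subst hip'
      rw [if_pos rfl]
      have e : ∀ j (b : k), (if i + j = i + q then h.repr x i * (σ ^ i) b else 0)
          = (if j = q then h.repr x i * (σ ^ i) b else 0) := by
        intro j b; congr 1; simp
      calc ((h.repr y).sum fun j b => if i + j = i + q then h.repr x i * (σ ^ i) b else 0)
          = ((h.repr y).sum fun j b => if j = q then h.repr x i * (σ ^ i) b else 0) :=
            Finsupp.sum_congr fun j _ => e j _
        _ = _ := by
            rw [Finsupp.sum_ite_eq']
            by_cases hq : q ∈ (h.repr y).support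
            · rw [if_pos hq]
            · rw [if_neg hq, Finsupp.notMem_support_iff.mp hq, map_zero, mul_zero]
    · rw [if_neg hip']
      apply Finset.sum_eq_zero
      intro j hj
      have := h.support_le_of_degLE hy hj
      exact if_neg (by omega)
  calc ((h.repr x).sum fun i a =>
        (h.repr y).sum fun j b => if i + j = p + q then a * (σ ^ i) b else 0)
      = ((h.repr x).sum fun i a => if i = p then h.repr x i * (σ ^ i) (h.repr y q) else 0) :=
        Finsupp.sum_congr step
    _ = _ := by
        rw [Finsupp.sum_ite_eq']
        by_cases hp : p ∈ (h.repr x).support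
        · rw [if_pos hp]
        · rw [if_neg hp, Finsupp.notMem_support_iff.mp hp, zero_mul]

theorem nontrivial (h : IsSkewPolyRing k σ R ι X) : (1 : R) ≠ 0 := by
  intro h10
  have : h.repr 1 = h.repr 0 := by rw [h10]
  rw [h.repr_one, h.repr_zero] at this
  have := DFunLike.congr_fun this 0
  simp at this

theorem exists_deg {y : R} (hy : y ≠ 0) :
    ∃ n, h.repr y n ≠ 0 ∧ h.degLE y n := by
  have hne : (h.repr y).support.Nonempty := by
    rw [Finsupp.support_nonempty_iff]
    exact fun hc => hy (h.repr_eq_zero.mp hc)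
  refine ⟨(h.repr y).support.max' hne, ?_, ?_⟩
  · exact Finsupp.mem_support_iff.mp ((h.repr y).support.max'_mem hne)
  · intro i hi
    by_contra hc
    exact absurd (Finset.le_max' _ i (Finsupp.mem_support_iff.mpr hc)) (by omega)

theorem sigma_pow_ne_zero (n : ℕ) {a : k} (ha : a ≠ 0) : (σ ^ n) a ≠ 0 := by
  intro hc
  exact ha (by simpa using (σ ^ n).injective (by simpa using hc))

theorem mul_ne_zero' (h : IsSkewPolyRing k σ R ι X) {x y : R} (hx : x ≠ 0) (hy : y ≠ 0) : x * y ≠ 0 := by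
  obtain ⟨p, hpx, hdx⟩ := h.exists_deg hx
  obtain ⟨q, hqy, hdy⟩ := h.exists_deg hy
  intro hc
  have := h.repr_mul_top hdx hdy
  rw [hc, h.repr_zero] at this
  exact mul_ne_zero hpx (sigma_pow_ne_zero (σ := σ) p hqy) (by simpa using this.symm)

theorem mul_right_cancel' (h : IsSkewPolyRing k σ R ι X) {x y z : R} (hz : z ≠ 0) (e : x * z = y * z) : x = y := by
  by_contra hc
  have : (x - y) * z = 0 := by rw [sub_mul, e, sub_self]
  exact h.mul_ne_zero' (fun hs => hc (by rwa [sub_eq_zero] at hs)) hz this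

theorem deg_le_of_ne_zero {y : R} {n m : ℕ} (hn : h.repr y n ≠ 0) (hm : h.degLE y m) :
    n ≤ m := by
  by_contra hc
  exact hn (hm n (by omega))

theorem monic_ne_zero {y : R} {d : ℕ} (hy : h.MonicOfDegree y d) : y ≠ 0 := by
  intro hc
  have := hy.1
  rw [hc, h.repr_zero] at this
  simp at this

theorem monic_deg_unique {y : R} {d e : ℕ} (hd : h.MonicOfDegree y d)
    (he : h.MonicOfDegree y e) : d = e := by
  have h1 : d ≤ e := h.deg_le_of_ne_zero (hd.1 ▸ one_ne_zero) he.2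
  have h2 : e ≤ d := h.deg_le_of_ne_zero (he.1 ▸ one_ne_zero) hd.2
  omega

theorem monic_mul {x y : R} {p q : ℕ} (hx : h.MonicOfDegree x p) (hy : h.MonicOfDegree y q) :
    h.MonicOfDegree (x * y) (p + q) := by
  refine ⟨?_, h.degLE_mul hx.2 hy.2⟩
  rw [h.repr_mul_top hx.2 hy.2, hx.1, hy.1, map_one, one_mul]

theorem monic_one : h.MonicOfDegree 1 0 := by
  constructor
  · rw [h.repr_one]; simp
  · intro i hi; rw [h.repr_one, Finsupp.single_apply, if_neg (by omega)]

theorem eq_one_of_monic_deg_zero {y : R} (hy : h.MonicOfDegree y 0) : y = 1 := by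
  have : h.repr y = Finsupp.single 0 1 := by
    ext i
    cases i with
    | zero => rw [hy.1]; simp
    | succ m => rw [hy.2 _ (by omega), Finsupp.single_apply, if_neg (by omega)]
  rw [← h.toF_repr y, this, toF_single]
  simp

theorem eq_iota_of_degLE_zero {y : R} (hy : h.degLE y 0) : y = ι (h.repr y 0) := by
  have : h.repr y = Finsupp.single 0 (h.repr y 0) := by
    ext i
    cases i with
    | zero => simp
    | succ m => rw [hy _ (by omega), Finsupp.single_apply, if_neg (by omega)]
  conv_lhs => rw [← h.toF_repr y, this, toF_single]
  simp

theorem isUnit_iota {c : k} (hc : c ≠ 0) : IsUnit (ι c) :=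
  ⟨⟨ι c, ι c⁻¹, by rw [← map_mul, mul_inv_cancel₀ hc, map_one],
    by rw [← map_mul, inv_mul_cancel₀ hc, map_one]⟩, rfl⟩

theorem isUnit_elim (h : IsSkewPolyRing k σ R ι X) {u : R} (hu : IsUnit u) : ∃ c : k, c ≠ 0 ∧ u = ι c := by
  obtain ⟨v, hv1, hv2⟩ : ∃ v, u * v = 1 ∧ v * u = 1 := ⟨(hu.unit⁻¹ : Rˣ), by simp [IsUnit.mul_val_inv], by simp [IsUnit.val_inv_mul]⟩
  have hu0 : u ≠ 0 := by rintro rfl; rw [zero_mul] at hv1; exact h.nontrivial hv1.symm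
  have hv0 : v ≠ 0 := by rintro rfl; rw [mul_zero] at hv1; exact h.nontrivial hv1.symm
  obtain ⟨p, hpu, hdu⟩ := h.exists_deg hu0
  obtain ⟨q, hqv, hdv⟩ := h.exists_deg hv0
  have htop : h.repr (u * v) (p + q) ≠ 0 := by
    rw [h.repr_mul_top hdu hdv]
    exact mul_ne_zero hpu (sigma_pow_ne_zero _ hqv)
  have hdeg1 : h.degLE (1 : R) 0 := h.monic_one.2
  have : p + q ≤ 0 := h.deg_le_of_ne_zero (by rwa [hv1] at htop) hdeg1
  have hp0 : p = 0 := by omega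
  refine ⟨h.repr u 0, by rwa [← hp0], ?_⟩
  exact h.eq_iota_of_degLE_zero (by rwa [hp0] at hdu)

theorem not_isUnit_of_monic {y : R} {d : ℕ} (hy : h.MonicOfDegree y d) (hd : 0 < d) :
    ¬ IsUnit y := by
  intro hc
  obtain ⟨c, hc0, rfl⟩ := h.isUnit_elim hc
  have := hy.1
  rw [h.repr_iota, Finsupp.single_apply, if_neg (by omega)] at this
  exact one_ne_zero this.symm

theorem repr_iota_mul (c : k) (y : R) (n : ℕ) : h.repr (ι c * y) n = c * h.repr y n := by
  classical
  rw [h.repr_mul, h.repr_iota, mulC_apply, Finsupp.sum_single_index (by simp)]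
  simp only [pow_zero, zero_add]
  calc (h.repr y).sum (fun j b => if j = n then c * (1 : k ≃+* k) b else 0)
      = if n ∈ (h.repr y).support then c * (1 : k ≃+* k) (h.repr y n) else 0 :=
        Finsupp.sum_ite_eq' _ _ _
    _ = c * h.repr y n := by
        by_cases hn : n ∈ (h.repr y).support
        · rw [if_pos hn]; rfl
        · rw [if_neg hn, Finsupp.notMem_support_iff.mp hn]; simp

theorem repr_mul_iota (y : R) (c : k) (n : ℕ) :
    h.repr (y * ι c) n = h.repr y n * (σ ^ n) c := by
  classical
  rw [h.repr_mul, h.repr_iota, mulC_apply]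
  have e : ∀ i (a : k), ((Finsupp.single 0 c).sum fun j b => if i + j = n then a * (σ ^ i) b else 0)
      = if i = n then a * (σ ^ i) c else 0 := by
    intro i a
    rw [Finsupp.sum_single_index (by simp)]
    simp
  calc ((h.repr y).sum fun i a =>
        (Finsupp.single 0 c).sum fun j b => if i + j = n then a * (σ ^ i) b else 0)
      = ((h.repr y).sum fun i a => if i = n then a * (σ ^ i) c else 0) :=
        Finsupp.sum_congr fun i _ => e i _
    _ = _ := by
        rw [Finsupp.sum_ite_eq']
        by_cases hn : n ∈ (h.repr y).support
        · rw [if_pos hn]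
        · rw [if_neg hn, Finsupp.notMem_support_iff.mp hn, zero_mul]

theorem monic_unit_mul_cancel {A T T' : R} (hA : IsUnit A) (hT : h.Monic T)
    (hT' : h.Monic T') (e : T = A * T') : T = T' := by
  obtain ⟨c, hc0, rfl⟩ := h.isUnit_elim hA
  obtain ⟨d, hd⟩ := hT
  obtain ⟨d', hd'⟩ := hT'
  have hrepr : ∀ n, h.repr T n = c * h.repr T' n := by
    intro n; rw [e, h.repr_iota_mul]
  have hdd' : d = d' := by
    have h1 : d ≤ d' := by
      refine h.deg_le_of_ne_zero (hd.1 ▸ one_ne_zero) ?_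
      intro i hi; rw [hrepr, hd'.2 _ hi, mul_zero]
    have h2 : d' ≤ d := by
      by_contra hc
      have := hrepr d'
      rw [hd.2 _ (by omega), hd'.1, mul_one] at this
      exact hc0 this.symm
    omega
  have : (1 : k) = c := by
    have := hrepr d
    rwa [hd.1, hdd', hd'.1, mul_one] at this
  rw [e, ← this]
  simp

theorem monic_list_prod (h : IsSkewPolyRing k σ R ι X) :
    ∀ L : List R, (∀ Q ∈ L, h.Monic Q) → h.Monic L.prod := by
  intro L
  induction L with
  | nil => intro _; exact ⟨0, by simpa using h.monic_one⟩
  | cons Q t ih =>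
    intro hL
    obtain ⟨d, hd⟩ := hL Q (by simp)
    obtain ⟨e, he⟩ := ih (fun q hq => hL q (by simp [hq]))
    exact ⟨d + e, by rw [List.prod_cons]; exact h.monic_mul hd he⟩

theorem deg_pos_of_not_unit (h : IsSkewPolyRing k σ R ι X) {A : R} (hA : A ≠ 0)
    (hAu : ¬ IsUnit A) {p : ℕ} (hp : h.repr A p ≠ 0) (hd : h.degLE A p) : 0 < p := by
  rcases Nat.eq_zero_or_pos p with rfl | h'
  · exfalso
    apply hAu
    rw [h.eq_iota_of_degLE_zero hd]
    exact isUnit_iota hp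
  · exact h'

theorem exists_factorization (h : IsSkewPolyRing k σ R ι X) :
    ∀ d : ℕ, ∀ P : R, h.MonicOfDegree P d →
      ∃ L : List R, (∀ Q ∈ L, h.Monic Q ∧ Irreducible Q) ∧ L.prod = P := by
  intro d
  induction d using Nat.strong_induction_on with
  | _ d ih =>
    intro P hP
    rcases Nat.eq_zero_or_pos d with rfl | hd
    · exact ⟨[], by simp, by simpa using (h.eq_one_of_monic_deg_zero hP).symm⟩
    by_cases hirr : Irreducible P
    · exact ⟨[P], by simpa using ⟨⟨d, hP⟩, hirr⟩, by simp⟩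
    have hPu : ¬ IsUnit P := h.not_isUnit_of_monic hP hd
    rw [irreducible_iff] at hirr
    push_neg at hirr
    obtain ⟨A, B, hAB, hAu, hBu⟩ := hirr hPu
    have hP0 : P ≠ 0 := h.monic_ne_zero hP
    have hA0 : A ≠ 0 := by rintro rfl; rw [zero_mul] at hAB; exact hP0 hAB
    have hB0 : B ≠ 0 := by rintro rfl; rw [mul_zero] at hAB; exact hP0 hAB
    obtain ⟨p, hpA, hdA⟩ := h.exists_deg hA0
    obtain ⟨q, hqB, hdB⟩ := h.exists_deg hB0
    have hp : 0 < p := h.deg_pos_of_not_unit hA0 hAu hpA hdA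
    have hq : 0 < q := h.deg_pos_of_not_unit hB0 hBu hqB hdB
    have htop : h.repr P (p + q) = h.repr A p * (σ ^ p) (h.repr B q) := by
      rw [hAB]; exact h.repr_mul_top hdA hdB
    have hdeg : p + q = d := by
      have h1 : d ≤ p + q := by
        refine h.deg_le_of_ne_zero (hP.1 ▸ one_ne_zero) ?_
        rw [hAB]; exact h.degLE_mul hdA hdB
      have h2 : p + q ≤ d :=
        h.deg_le_of_ne_zero (htop ▸ mul_ne_zero hpA (sigma_pow_ne_zero (σ := σ) p hqB)) hP.2
      omega
    set c := h.repr B q with hc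
    have hc0 : c ≠ 0 := hqB
    have hP1 : P = (A * ι c) * (ι c⁻¹ * B) := by
      rw [mul_assoc, ← mul_assoc (ι c), ← map_mul, mul_inv_cancel₀ hc0, map_one, one_mul, hAB]
    have hA1 : h.MonicOfDegree (A * ι c) p := by
      constructor
      · rw [h.repr_mul_iota]
        have := hP.1
        rw [← hdeg] at this
        rw [htop] at this
        exact this
      · intro i hi; rw [h.repr_mul_iota, hdA i hi, zero_mul]
    have hB1 : h.MonicOfDegree (ι c⁻¹ * B) q := by
      constructor
      · rw [h.repr_iota_mul, ← hc, inv_mul_cancel₀ hc0]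
      · intro i hi; rw [h.repr_iota_mul, hdB i hi, mul_zero]
    obtain ⟨LA, hLA, hLAp⟩ := ih p (by omega) _ hA1
    obtain ⟨LB, hLB, hLBp⟩ := ih q (by omega) _ hB1
    refine ⟨LA ++ LB, ?_, ?_⟩
    · intro Q hQ
      rcases List.mem_append.mp hQ with hQ | hQ
      · exact hLA Q hQ
      · exact hLB Q hQ
    · rw [List.prod_append, hLAp, hLBp, hP1]

theorem unique_factorization_aux (h : IsSkewPolyRing k σ R ι X) (P : R)
    (hcomp : ∀ T T' : R, h.Monic T → h.Monic T' → (∃ C, P = C * T) → (∃ C, P = C * T') →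
      (∃ A, T = A * T') ∨ (∃ A, T' = A * T)) :
    ∀ L L' : List R, (∀ Q ∈ L, h.Monic Q ∧ Irreducible Q) →
      (∀ Q ∈ L', h.Monic Q ∧ Irreducible Q) → L.prod = L'.prod →
      (∃ C, P = C * L.prod) → L = L' := by
  have key : ∀ (Q : R) (t : List R), (∀ Q' ∈ Q :: t, h.Monic Q' ∧ Irreducible Q') →
      (Q :: t).prod ≠ 1 := by
    intro Q t hQt hc
    obtain ⟨d, hd⟩ := (hQt Q (by simp)).1
    have hQirr := (hQt Q (by simp)).2
    have hd0 : 0 < d := by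
      rcases Nat.eq_zero_or_pos d with rfl | h' 
      · exact absurd (h.eq_one_of_monic_deg_zero hd ▸ isUnit_one) hQirr.not_isUnit
      · exact h'
    obtain ⟨e, he⟩ := h.monic_list_prod t (fun q hq => (hQt q (by simp [hq])).1)
    have : h.MonicOfDegree (Q :: t).prod (d + e) := by
      rw [List.prod_cons]; exact h.monic_mul hd he
    have := h.monic_deg_unique (hc ▸ this) h.monic_one
    omega
  intro L
  induction L with
  | nil =>
    intro L' _ hL' hprod _
    cases L' with
    | nil => rfl
    | cons Q' t' => exact absurd (by simpa using hprod.symm) (key Q' t' hL')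
  | cons Q t ih =>
    intro L' hL hL' hprod hsuf
    cases L' with
    | nil => exact absurd (by simpa using hprod) (key Q t hL)
    | cons Q' t' =>
      have hQ := hL Q (by simp)
      have hQ' := hL' Q' (by simp)
      have hT : h.Monic t.prod := h.monic_list_prod t (fun q hq => (hL q (by simp [hq])).1)
      have hT' : h.Monic t'.prod := h.monic_list_prod t' (fun q hq => (hL' q (by simp [hq])).1)
      have hT0 : t.prod ≠ 0 := by obtain ⟨e, he⟩ := hT; exact h.monic_ne_zero he
      have hT0' : t'.prod ≠ 0 := by obtain ⟨e, he⟩ := hT'; exact h.monic_ne_zero he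
      obtain ⟨C, hC⟩ := hsuf
      rw [List.prod_cons] at hC
      have hsufT : ∃ C, P = C * t.prod := ⟨C * Q, by rw [mul_assoc, ← hC]⟩
      have hsufT' : ∃ C, P = C * t'.prod := by
        refine ⟨C * Q', ?_⟩
        rw [mul_assoc, ← List.prod_cons (a := Q'), ← hprod, List.prod_cons, ← hC]
      rw [List.prod_cons, List.prod_cons] at hprod
      have hTT' : t.prod = t'.prod := by
        rcases hcomp t.prod t'.prod hT hT' hsufT hsufT' with ⟨A, hA⟩ | ⟨A, hA⟩
        · have : Q * A * t'.prod = Q' * t'.prod := by rw [mul_assoc, ← hA, hprod]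
          have hQA : Q' = Q * A := (h.mul_right_cancel' hT0' this).symm
          have : IsUnit A := by
            rcases hQ'.2.isUnit_or_isUnit hQA with hu | hu
            · exact absurd hu hQ.2.not_isUnit
            · exact hu
          exact h.monic_unit_mul_cancel this hT hT' hA
        · have : Q * t.prod = Q' * A * t.prod := by rw [mul_assoc, ← hA, hprod]
          have hQA : Q = Q' * A := h.mul_right_cancel' hT0 this
          have : IsUnit A := by
            rcases hQ.2.isUnit_or_isUnit hQA with hu | hu
            · exact absurd hu hQ'.2.not_isUnit
            · exact hu
          exact (h.monic_unit_mul_cancel this hT' hT hA).symm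
      have hQQ' : Q = Q' := by
        apply h.mul_right_cancel' hT0
        rw [hprod, hTT']
      have htt : t = t' := ih t' (fun q hq => hL q (by simp [hq]))
        (fun q hq => hL' q (by simp [hq])) hTT' hsufT
      rw [hQQ', htt]

section Chain

open Polynomial

variable {F : Type*} [Field F] {M : Type*} [AddCommGroup M] [Module F M] [Module.Finite F M]

theorem invariant_subspace_chain (ψ : M →ₗ[F] M) (g : Polynomial F) (a : ℕ)
    (hg : Irreducible g) (hchar : LinearMap.charpoly ψ = g ^ a)
    (hmin : minpoly F ψ = LinearMap.charpoly ψ)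
    (N₁ N₂ : Submodule F M) (hN₁ : ∀ x ∈ N₁, ψ x ∈ N₁) (hN₂ : ∀ x ∈ N₂, ψ x ∈ N₂) :
    N₁ ≤ N₂ ∨ N₂ ≤ N₁ := by
  classical
  rcases Nat.eq_zero_or_pos a with rfl | ha
  · have h0 : Module.finrank F M = 0 := by
      rw [← LinearMap.charpoly_natDegree ψ, hchar]; simp
    have : Subsingleton M := Module.finrank_zero_iff.mp h0
    left; intro x _; rw [Subsingleton.elim x 0]; exact N₂.zero_mem
  set n := Module.finrank F M with hnd
  have hglead : 0 < g.natDegree := hg.natDegree_pos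
  have hn : a * g.natDegree = n := by
    rw [← Polynomial.natDegree_pow, ← hchar, LinearMap.charpoly_natDegree]
  have hn1 : 0 < n := by nlinarith
  -- `g ^ (a-1)` does not annihilate
  have hne : Polynomial.aeval ψ (g ^ (a - 1)) ≠ 0 := by
    intro hc
    have hdvd := minpoly.dvd F ψ hc
    rw [hmin, hchar] at hdvd
    have hgo : g ^ (a - 1) ≠ 0 := pow_ne_zero _ hg.ne_zero
    have hle := Polynomial.natDegree_le_of_dvd hdvd hgo
    rw [Polynomial.natDegree_pow, Polynomial.natDegree_pow] at hle
    have := Nat.le_of_mul_le_mul_right (by omega : a * g.natDegree ≤ (a-1) * g.natDegree) hglead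
    omega
  obtain ⟨v, hv⟩ : ∃ v, Polynomial.aeval ψ (g ^ (a - 1)) v ≠ 0 := by
    by_contra hc; push_neg at hc; exact hne (LinearMap.ext hc)
  -- the annihilator ideal of `v`
  let Iv : Ideal (Polynomial F) :=
  { carrier := {p | Polynomial.aeval ψ p v = 0}
    add_mem' := fun hp hq => by
      simp only [Set.mem_setOf_eq] at *
      rw [map_add, LinearMap.add_apply, hp, hq, add_zero]
    zero_mem' := by simp
    smul_mem' := fun c x hx => by
      simp only [Set.mem_setOf_eq, smul_eq_mul] at *
      rw [Polynomial.aeval_mul, Module.End.mul_apply, hx, map_zero] }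
  obtain ⟨b, hb⟩ := (IsPrincipalIdealRing.principal Iv).principal
  rw [Ideal.submodule_span_eq] at hb
  have hga : (g : Polynomial F) ^ a ∈ Iv := by
    show Polynomial.aeval ψ (g ^ a) v = 0
    rw [← hchar, ← hmin, minpoly.aeval]
    rfl
  have hbdvd : b ∣ g ^ a := by rwa [hb, Ideal.mem_span_singleton] at hga
  have hb0 : b ≠ 0 := by
    rintro rfl
    exact (pow_ne_zero a hg.ne_zero) (zero_dvd_iff.mp hbdvd)
  obtain ⟨i, hia, hassoc⟩ := (dvd_prime_pow hg.prime a).mp hbdvd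
  have hi : i = a := by
    by_contra hc
    have h1 : b ∣ g ^ (a - 1) := hassoc.dvd.trans (pow_dvd_pow g (by omega))
    have h2 : g ^ (a - 1) ∈ Iv := by rw [hb, Ideal.mem_span_singleton]; exact h1
    exact hv h2
  rw [hi] at hassoc
  have hbdeg : b.natDegree = n := by
    obtain ⟨u, hu⟩ := hassoc
    have : (b * (u : Polynomial F)).natDegree = a * g.natDegree := by
      rw [hu, Polynomial.natDegree_pow]
    rw [Polynomial.natDegree_mul hb0 (Units.ne_zero u),
      Polynomial.natDegree_eq_zero_of_isUnit u.isUnit] at this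
    omega
  -- the evaluation map
  let Φ : Polynomial F →ₗ[F] M :=
  { toFun := fun p => Polynomial.aeval ψ p v
    map_add' := fun p q => by rw [map_add, LinearMap.add_apply]
    map_smul' := fun c p => by
      rw [map_smul, LinearMap.smul_apply, RingHom.id_apply] }
  -- linear independence of the first `n` iterates
  haveI : Nonempty (Fin n) := ⟨⟨0, hn1⟩⟩
  have hli : LinearIndependent F (fun i : Fin n => Φ ((Polynomial.X : Polynomial F) ^ (i : ℕ))) := by
    rw [Fintype.linearIndependent_iff]
    intro c hc
    set p : Polynomial F := ∑ i : Fin n, c i • (Polynomial.X : Polynomial F) ^ (i : ℕ) with hp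
    have hΦp : Φ p = 0 := by
      rw [hp, map_sum]
      simpa using hc
    have hpz : p = 0 := by
      by_contra hp0
      have hmem : p ∈ Iv := hΦp
      rw [hb, Ideal.mem_span_singleton] at hmem
      have hdeg := Polynomial.natDegree_le_of_dvd hmem hp0
      have hplt : p.natDegree < n := by
        have : p.natDegree ≤ n - 1 := by
          refine Polynomial.natDegree_sum_le_of_forall_le _ _ ?_
          intro i _
          refine le_trans (Polynomial.natDegree_smul_le _ _) ?_
          rw [Polynomial.natDegree_X_pow]
          omega
        omega
      omega
    intro i
    have hco := congrArg (fun q => Polynomial.coeff q (i : ℕ)) hpz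
    simp only [hp, Polynomial.finset_sum_coeff, Polynomial.coeff_smul, Polynomial.coeff_X_pow,
      Polynomial.coeff_zero, smul_eq_mul, mul_ite, mul_one, mul_zero, Fin.val_eq_val,
      Finset.sum_ite_eq', Finset.sum_ite_eq, Finset.mem_univ, if_true] at hco
    exact hco
  -- surjectivity of Φ
  have hspan := hli.span_eq_top_of_card_eq_finrank (by simpa using hnd)
  have hΦsurj : ∀ x : M, ∃ p : Polynomial F, Polynomial.aeval ψ p v = x := by
    intro x
    have hx : x ∈ Submodule.span F
        (Set.range fun i : Fin n => Φ ((Polynomial.X : Polynomial F) ^ (i : ℕ))) := by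
      rw [hspan]; trivial
    have hle : Submodule.span F
        (Set.range fun i : Fin n => Φ ((Polynomial.X : Polynomial F) ^ (i : ℕ)))
          ≤ LinearMap.range Φ := by
      rw [Submodule.span_le]
      rintro _ ⟨j, rfl⟩
      exact ⟨(Polynomial.X : Polynomial F) ^ (j : ℕ), rfl⟩
    obtain ⟨p, hpx⟩ := hle hx
    exact ⟨p, hpx⟩
  -- invariance under polynomials of ψ
  have inv_pow : ∀ (N : Submodule F M), (∀ x ∈ N, ψ x ∈ N) →
      ∀ (m : ℕ) (x : M), x ∈ N → (ψ ^ m) x ∈ N := by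
    intro N hN m
    induction m with
    | zero => intro x hx; simpa using hx
    | succ j ihm =>
      intro x hx
      rw [pow_succ, Module.End.mul_apply]
      exact ihm _ (hN x hx)
  have inv_poly : ∀ (N : Submodule F M), (∀ x ∈ N, ψ x ∈ N) →
      ∀ (q : Polynomial F) (x : M), x ∈ N → Polynomial.aeval ψ q x ∈ N := by
    intro N hN q
    induction q using Polynomial.induction_on' with
    | add p q hp hq =>
      intro x hx
      rw [map_add, LinearMap.add_apply]
      exact N.add_mem (hp x hx) (hq x hx)
    | monomial m c =>
      intro x hx
      rw [Polynomial.aeval_monomial, Module.End.mul_apply]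
      have h1 : (ψ ^ m) x ∈ N := inv_pow N hN m x hx
      have h2 : (algebraMap F (M →ₗ[F] M)) c = c • (1 : M →ₗ[F] M) := by
        rw [Algebra.algebraMap_eq_smul_one]
      rw [h2, LinearMap.smul_apply, Module.End.one_apply]
      exact N.smul_mem c h1
  -- the ideals attached to invariant subspaces
  -- attach an ideal to each invariant subspace
  let I : ∀ (N : Submodule F M), (∀ x ∈ N, ψ x ∈ N) → Ideal (Polynomial F) := fun N hN =>
  { carrier := {p | Polynomial.aeval ψ p v ∈ N}
    add_mem' := fun hp hq => by
      simp only [Set.mem_setOf_eq] at *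
      rw [map_add, LinearMap.add_apply]
      exact N.add_mem hp hq
    zero_mem' := by simp
    smul_mem' := fun c x hx => by
      simp only [Set.mem_setOf_eq, smul_eq_mul] at *
      rw [Polynomial.aeval_mul, Module.End.mul_apply]
      exact inv_poly N hN c _ hx }
  have hI : ∀ (N : Submodule F M) (hN : ∀ x ∈ N, ψ x ∈ N) (p : Polynomial F),
      p ∈ I N hN ↔ Polynomial.aeval ψ p v ∈ N := fun _ _ _ => Iff.rfl
  have hIle : ∀ (N N' : Submodule F M) (hN : ∀ x ∈ N, ψ x ∈ N) (hN' : ∀ x ∈ N', ψ x ∈ N'),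
      I N hN ≤ I N' hN' → N ≤ N' := by
    intro N N' hN hN' hle x hx
    obtain ⟨p, hpx⟩ := hΦsurj x
    have hmem : p ∈ I N hN := by
      show Polynomial.aeval ψ p v ∈ N
      rw [hpx]; exact hx
    have h2 : Polynomial.aeval ψ p v ∈ N' := hle hmem
    rwa [hpx] at h2
  -- each ideal is generated by a power of g
  have hIgen : ∀ (N : Submodule F M) (hN : ∀ x ∈ N, ψ x ∈ N),
      ∃ j ≤ a, I N hN = Ideal.span {g ^ j} := by
    intro N hN
    obtain ⟨c, hc⟩ := (IsPrincipalIdealRing.principal (I N hN)).principal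
    rw [Ideal.submodule_span_eq] at hc
    have hbc : c ∣ b := by
      have : b ∈ I N hN := by
        show Polynomial.aeval ψ b v ∈ N
        have hbv : Polynomial.aeval ψ b v = 0 := by
          have : b ∈ Iv := by rw [hb]; exact Ideal.mem_span_singleton.mpr dvd_rfl
          exact this
        rw [hbv]; exact N.zero_mem
      rwa [hc, Ideal.mem_span_singleton] at this
    have hcga : c ∣ g ^ a := hbc.trans hassoc.dvd
    obtain ⟨j, hji, hjassoc⟩ := (dvd_prime_pow hg.prime a).mp hcga
    refine ⟨j, hji, ?_⟩
    rw [hc]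
    exact Ideal.span_singleton_eq_span_singleton.mpr hjassoc
  obtain ⟨j₁, _, hj₁⟩ := hIgen N₁ hN₁
  obtain ⟨j₂, _, hj₂⟩ := hIgen N₂ hN₂
  rcases le_total j₁ j₂ with hj | hj
  · right
    refine hIle N₂ N₁ hN₂ hN₁ ?_
    rw [hj₁, hj₂]
    exact Ideal.span_singleton_le_span_singleton.mpr (pow_dvd_pow g hj)
  · left
    refine hIle N₁ N₂ hN₁ hN₂ ?_
    rw [hj₁, hj₂]
    exact Ideal.span_singleton_le_span_singleton.mpr (pow_dvd_pow g hj)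

end Chain

end IsSkewPolyRing

/-- The fixed subfield `k^σ` of an automorphism `σ` of `k`. -/
def fixedSubfield {k : Type*} [Field k] (σ : k ≃+* k) : Subfield k where
  carrier := {a | σ a = a}
  mul_mem' := by intro a b ha hb; simp_all [Set.mem_setOf_eq]
  one_mem' := map_one σ
  add_mem' := by intro a b ha hb; simp_all [Set.mem_setOf_eq]
  zero_mem' := map_zero σ
  neg_mem' := by intro a ha; simp_all [Set.mem_setOf_eq]
  inv_mem' := by intro a ha; simp_all [Set.mem_setOf_eq]

/-- The element of `k[X,σ]` corresponding to a commutative polynomial with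
coefficients in the fixed field `k^σ`, via the substitution `Y ↦ X^r`; these are
exactly the elements of `k^σ[X^r]`. -/
noncomputable def centralElt {k : Type*} [Field k] (σ : k ≃+* k)
    {R : Type*} [Ring R] (ι : k →+* R) (X : R) (r : ℕ)
    (f : Polynomial (fixedSubfield σ)) : R :=
  Polynomial.eval₂ (ι.comp (fixedSubfield σ).subtype) (X ^ r) f

set_option synthInstance.maxHeartbeats 1000000 in
/-- Let `P ∈ k[X,σ]` be monic étale such that the Jordan form of `φ^r` on
`D_P = k[X,σ]/k[X,σ]P` (as a `k^σ`-linear map) consists of a single Jordan block,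
i.e. the characteristic polynomial of `φ^r` is a power of an irreducible polynomial
over `k^σ` and coincides with its minimal polynomial. Then `P` admits a unique
factorization as a product of monic irreducible skew polynomials. -/
theorem unique_factorization_of_single_jordan_block
    {k R : Type*} [Field k] [Fintype k] [Ring R]
    (σ : k ≃+* k) (r : ℕ) (hr : orderOf σ = r) (ι : k →+* R) (X : R)
    (h : IsSkewPolyRing k σ R ι X) (P : R) (hP : h.Monic P) (hetale : h.repr P 0 ≠ 0)
    (hfin : letI : Module (fixedSubfield σ) (R ⧸ (Ideal.span {P} : Ideal R)) :=
        Module.compHom _ (ι.comp (fixedSubfield σ).subtype)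
      Module.Finite (fixedSubfield σ) (R ⧸ (Ideal.span {P} : Ideal R))) :
    letI : Module (fixedSubfield σ) (R ⧸ (Ideal.span {P} : Ideal R)) :=
        Module.compHom _ (ι.comp (fixedSubfield σ).subtype)
    haveI := hfin
    ∀ ψ : (R ⧸ (Ideal.span {P} : Ideal R)) →ₗ[fixedSubfield σ]
        (R ⧸ (Ideal.span {P} : Ideal R)),
      (∀ x : R, ψ (Submodule.Quotient.mk x) = Submodule.Quotient.mk ((X ^ r) * x)) →
      (∃ (g : Polynomial (fixedSubfield σ)) (a : ℕ), Irreducible g ∧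
        LinearMap.charpoly ψ = g ^ a ∧
        minpoly (fixedSubfield σ) ψ = LinearMap.charpoly ψ) →
      ∃! L : List R, (∀ Q ∈ L, h.Monic Q ∧ Irreducible Q) ∧ L.prod = P := by
  letI inst : Module (fixedSubfield σ) (R ⧸ (Ideal.span {P} : Ideal R)) :=
    Module.compHom _ (ι.comp (fixedSubfield σ).subtype)
  haveI finst : Module.Finite (fixedSubfield σ) (R ⧸ (Ideal.span {P} : Ideal R)) := hfin
  intro ψ hψ hj
  obtain ⟨g, a, hg, hchar, hmin⟩ := hj
  -- the submodule attached to a right divisor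
  let NS : R → Submodule (fixedSubfield σ) (R ⧸ (Ideal.span {P} : Ideal R)) := fun T =>
    { carrier := {m | ∃ c : R, m = Submodule.Quotient.mk (c * T)}
      add_mem' := by
        rintro m1 m2 ⟨c1, rfl⟩ ⟨c2, rfl⟩
        exact ⟨c1 + c2, by rw [add_mul, Submodule.Quotient.mk_add]⟩
      zero_mem' := ⟨0, by rw [zero_mul, Submodule.Quotient.mk_zero]⟩
      smul_mem' := by
        rintro f m ⟨c, rfl⟩
        refine ⟨ι (f : k) * c, ?_⟩
        have e1 : f • (Submodule.Quotient.mk (c * T) : R ⧸ (Ideal.span {P} : Ideal R))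
            = (ι (f : k)) • Submodule.Quotient.mk (c * T) := rfl
        rw [e1, ← Submodule.Quotient.mk_smul, smul_eq_mul, mul_assoc] }
  have hinv : ∀ T : R, ∀ m ∈ NS T, ψ m ∈ NS T := by
    rintro T m ⟨c, rfl⟩
    rw [hψ (c * T)]
    exact ⟨X ^ r * c, by rw [mul_assoc]⟩
  have hcomp : ∀ T T' : R, h.Monic T → h.Monic T' → (∃ C, P = C * T) → (∃ C, P = C * T') →
      (∃ A, T = A * T') ∨ (∃ A, T' = A * T) := by
    rintro T T' hT hT' ⟨C, hC⟩ ⟨C', hC'⟩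
    have key : ∀ S S' C'' : R, P = C'' * S' → NS S ≤ NS S' → ∃ A, S = A * S' := by
      intro S S' C'' hC'' hle
      have hmem : (Submodule.Quotient.mk S : R ⧸ (Ideal.span {P} : Ideal R)) ∈ NS S :=
        ⟨1, by rw [one_mul]⟩
      obtain ⟨c, hc⟩ := hle hmem
      rw [Submodule.Quotient.eq] at hc
      obtain ⟨d, hd⟩ := Submodule.mem_span_singleton.mp hc
      rw [smul_eq_mul] at hd
      refine ⟨d * C'' + c, ?_⟩
      have : S - c * S' = d * P := hd.symm
      have h2 : S = d * P + c * S' := by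
        rw [← this]; abel
      rw [h2, hC'', add_mul, mul_assoc]
    rcases IsSkewPolyRing.invariant_subspace_chain ψ g a hg hchar hmin (NS T) (NS T')
        (hinv T) (hinv T') with hle | hle
    · exact Or.inl (key T T' C' hC' hle)
    · exact Or.inr (key T' T C hC hle)
  obtain ⟨d, hPd⟩ := hP
  obtain ⟨L, hL, hLp⟩ := h.exists_factorization d P hPd
  refine ⟨L, ⟨hL, hLp⟩, ?_⟩
  rintro L' ⟨hL', hL'p⟩
  exact h.unique_factorization_aux P hcomp L' L hL' hL (by rw [hLp, hL'p])
    ⟨1, by rw [one_mul, hL'p]⟩
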